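/- Let φ denote the standard normal density φ(t) = (1/√(2π)) e^{−t²/2} and Φ the standard normal cumulative distribution function. Then for every x ∈ ℝ, ∫_{−∞}^{x} t(t−x) φ(t) dt = Φ(x). Equivalently, if X is a standard normal random variable then E[X(X−x) 1{X ≤ x}] = Φ(x) for all x ∈ ℝ. -/

import Mathlib

open MeasureTheory ProbabilityTheory Real Filter Topology
open scoped ENNReal NNReal

namespace StdNormalAux

noncomputable def phi (t : ℝ) : ℝ := (Real.sqrt (2 * Real.pi))⁻¹ * Real.exp (-t ^ 2 / 2)

lemma phi_nonneg (t : ℝ) : 0 ≤ phi t := by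
  unfold phi
  positivity

lemma pdf_eq (t : ℝ) : gaussianPDFReal 0 1 t = phi t := by
  simp [gaussianPDFReal, phi]

lemma integrable_exp_half : Integrable (fun t : ℝ => Real.exp (-(1/2) * t ^ 2)) :=
  integrable_exp_neg_mul_sq (by norm_num)

lemma integrable_mul_exp_half : Integrable (fun t : ℝ => t * Real.exp (-(1/2) * t ^ 2)) :=
  integrable_mul_exp_neg_mul_sq (by norm_num)

lemma integrable_sq_mul_exp_half : Integrable (fun t : ℝ => t ^ 2 * Real.exp (-(1/2) * t ^ 2)) := by
  have h := integrable_rpow_mul_exp_neg_mul_sq (b := 1/2) (by norm_num) (s := 2) (by norm_num)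
  refine h.congr (Filter.EventuallyEq.of_eq ?_)
  funext t
  rw [show ((2 : ℝ) : ℝ) = ((2 : ℕ) : ℝ) by norm_num, Real.rpow_natCast]

lemma integrable_h (x : ℝ) : Integrable (fun t : ℝ => (t * (t - x) - 1) * phi t) := by
  have : (fun t : ℝ => (t * (t - x) - 1) * phi t) =
      fun t => (Real.sqrt (2 * Real.pi))⁻¹ * (t ^ 2 * Real.exp (-(1/2) * t ^ 2))
        - ((Real.sqrt (2 * Real.pi))⁻¹ * x) * (t * Real.exp (-(1/2) * t ^ 2))
        - (Real.sqrt (2 * Real.pi))⁻¹ * Real.exp (-(1/2) * t ^ 2) := by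
    funext t
    have : -t ^ 2 / 2 = -(1/2) * t ^ 2 := by ring
    unfold phi
    rw [this]
    ring
  rw [this]
  exact ((integrable_sq_mul_exp_half.const_mul _).sub
    (integrable_mul_exp_half.const_mul _)).sub (integrable_exp_half.const_mul _)

lemma integrable_phi : Integrable phi := by
  have : phi = fun t => (Real.sqrt (2 * Real.pi))⁻¹ * Real.exp (-(1/2) * t ^ 2) := by
    funext t
    unfold phi
    congr 1
    ring_nf
  rw [this]
  exact integrable_exp_half.const_mul _

lemma hasDerivAt_g (x t : ℝ) :
    HasDerivAt (fun t => (x - t) * phi t) ((t * (t - x) - 1) * phi t) t := by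
  have h1 : HasDerivAt (fun t : ℝ => -t ^ 2 / 2) (-t) t := by
    have := ((hasDerivAt_pow 2 t).neg).div_const 2
    refine this.congr_deriv ?_
    ring
  have h2 := (h1.exp).const_mul (Real.sqrt (2 * Real.pi))⁻¹
  have h3 : HasDerivAt (fun t : ℝ => x - t) (-1) t := (hasDerivAt_id t).const_sub x
  have := h3.mul h2
  refine this.congr_deriv ?_
  unfold phi
  ring

lemma tendsto_g (x : ℝ) : Tendsto (fun t => (x - t) * phi t) atBot (𝓝 0) := by
  have habs : ∀ s : ℝ, Tendsto (fun t : ℝ => |t| ^ s * Real.exp (-(1/2) * t ^ 2)) atBot (𝓝 0) := by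
    intro s
    have := tendsto_rpow_abs_mul_exp_neg_mul_sq_cocompact (a := 1/2) (by norm_num) s
    rw [cocompact_eq_atBot_atTop] at this
    exact this.mono_left le_sup_left
  have h0 : Tendsto (fun t : ℝ => Real.exp (-(1/2) * t ^ 2)) atBot (𝓝 0) := by
    have := habs 0
    simpa using this
  have h1 : Tendsto (fun t : ℝ => t * Real.exp (-(1/2) * t ^ 2)) atBot (𝓝 0) := by
    refine squeeze_zero_norm (fun t => ?_) (habs 1)
    rw [Real.rpow_one, norm_mul]
    simp [abs_of_pos (Real.exp_pos _)]
  have : Tendsto (fun t : ℝ => (Real.sqrt (2 * Real.pi))⁻¹ *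
      (x * Real.exp (-(1/2) * t ^ 2) - t * Real.exp (-(1/2) * t ^ 2))) atBot (𝓝 0) := by
    have := ((h0.const_mul x).sub h1).const_mul (Real.sqrt (2 * Real.pi))⁻¹
    simpa using this
  refine this.congr fun t => ?_
  unfold phi
  have : -t ^ 2 / 2 = -(1/2) * t ^ 2 := by ring
  rw [this]
  ring

lemma key (x : ℝ) : (∫ t in Set.Iic x, (t * (t - x) - 1) * phi t) = 0 := by
  have := integral_Iic_of_hasDerivAt_of_tendsto' (a := x)
    (f := fun t => (x - t) * phi t) (f' := fun t => (t * (t - x) - 1) * phi t)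
    (fun t _ => hasDerivAt_g x t) ((integrable_h x).integrableOn) (tendsto_g x)
  simpa using this

lemma cdf_eq (x : ℝ) : cdf (gaussianReal 0 1) x = ∫ t in Set.Iic x, phi t := by
  rw [cdf_eq_real, measureReal_def, gaussianReal_apply_eq_integral 0 one_ne_zero,
    ENNReal.toReal_ofReal (setIntegral_nonneg measurableSet_Iic
      fun t _ => gaussianPDFReal_nonneg 0 1 t)]
  exact setIntegral_congr_fun measurableSet_Iic fun t _ => pdf_eq t

lemma first (x : ℝ) : (∫ t in Set.Iic x, t * (t - x) * phi t) = cdf (gaussianReal 0 1) x := by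
  have hsplit : ∀ t : ℝ, t * (t - x) * phi t = (t * (t - x) - 1) * phi t + phi t := by
    intro t; ring
  rw [cdf_eq]
  calc (∫ t in Set.Iic x, t * (t - x) * phi t)
      = ∫ t in Set.Iic x, ((t * (t - x) - 1) * phi t + phi t) := by
        exact setIntegral_congr_fun measurableSet_Iic fun t _ => hsplit t
    _ = (∫ t in Set.Iic x, (t * (t - x) - 1) * phi t) + ∫ t in Set.Iic x, phi t :=
        integral_add (integrable_h x).integrableOn integrable_phi.integrableOn
    _ = ∫ t in Set.Iic x, phi t := by rw [key x, zero_add]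

end StdNormalAux

open StdNormalAux

/-- For the standard normal density `φ(t) = (2π)^{-1/2} e^{-t²/2}` and the standard normal
cdf `Φ`, one has `∫_{-∞}^x t (t - x) φ(t) dt = Φ(x)` for every `x ∈ ℝ`; equivalently, if
`X` is standard normal then `E[X (X - x) 1{X ≤ x}] = Φ(x)`. -/
theorem integral_stdNormal_eq_cdf (x : ℝ) :
    (∫ t in Set.Iic x, t * (t - x) * ((Real.sqrt (2 * Real.pi))⁻¹ * Real.exp (-t ^ 2 / 2))) =
      cdf (gaussianReal 0 1) x ∧
    (∫ t in Set.Iic x, t * (t - x) ∂(gaussianReal 0 1)) = cdf (gaussianReal 0 1) x := by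
  constructor
  · exact first x
  · have hmeas : Measurable fun t : ℝ => (gaussianPDFReal 0 1 t).toNNReal :=
      (measurable_gaussianPDFReal 0 1).real_toNNReal
    have hmeq : (gaussianReal 0 1).restrict (Set.Iic x) =
        (volume.restrict (Set.Iic x)).withDensity
          (fun t => ((gaussianPDFReal 0 1 t).toNNReal : ℝ≥0∞)) := by
      rw [gaussianReal_of_var_ne_zero 0 one_ne_zero, restrict_withDensity measurableSet_Iic]
      rfl
    rw [show (∫ t in Set.Iic x, t * (t - x) ∂(gaussianReal 0 1)) =
        ∫ t, t * (t - x) ∂((gaussianReal 0 1).restrict (Set.Iic x)) from rfl, hmeq,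
      integral_withDensity_eq_integral_smul hmeas]
    rw [← first x]
    refine setIntegral_congr_fun measurableSet_Iic fun t _ => ?_
    rw [NNReal.smul_def, smul_eq_mul, Real.coe_toNNReal _ (gaussianPDFReal_nonneg 0 1 t),
      pdf_eq]
    ring
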